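/- Let α > 0 and suppose that ∂_r v(α, r) > 0 and v(α, r) ≤ 1 for all r ∈ (0, R_α). Then R_α = ∞ and lim_{r→∞} v(α, r) = 1. -/

import Mathlib

open Filter Set Topology

/-- The degree-`n` vortex equation at a point `r`:
`(1/2)·u'' + (1/2)·coth(r)·u' − (n²/(2·sinh²(r)))·u + u − u³ = 0`. -/
def VortexEqAt (n : ℝ) (u : ℝ → ℝ) (r : ℝ) : Prop :=
  (1/2) * deriv (deriv u) r + (1/2) * (Real.cosh r / Real.sinh r) * deriv u r
    - n ^ 2 / (2 * Real.sinh r ^ 2) * u r + u r - u r ^ 3 = 0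

/-- `u` is a (C²) solution of the degree-`n` vortex equation on the set `s`. -/
def IsVortexSolOn (n : ℝ) (u : ℝ → ℝ) (s : Set ℝ) : Prop :=
  ContDiffOn ℝ 2 u s ∧ ∀ r ∈ s, VortexEqAt n u r

/-- The interval `(0, R)` for an extended-real right endpoint `R`. -/
def MaxDom (R : EReal) : Set ℝ := {r : ℝ | 0 < r ∧ (r : EReal) < R}

/-- `u` is the maximal solution of the degree-`n` vortex equation on `(0, R)` with
`u(r)/rⁿ → α` as `r → 0⁺`: it solves the equation, has the prescribed behaviour at the
origin, every solution with the same behaviour at the origin is defined at most up to `R`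
and agrees with `u`, and either `R = ∞` or `u` blows up at `R⁻`. -/
def IsMaximalVortexSol (n α : ℝ) (u : ℝ → ℝ) (R : EReal) : Prop :=
  0 < R ∧
  IsVortexSolOn n u (MaxDom R) ∧
  Tendsto (fun r => u r / r ^ n) (nhdsWithin 0 (Set.Ioi 0)) (nhds α) ∧
  (∀ b : ℝ, 0 < b → ∀ w : ℝ → ℝ, IsVortexSolOn n w (Set.Ioo 0 b) →
    Tendsto (fun r => w r / r ^ n) (nhdsWithin 0 (Set.Ioi 0)) (nhds α) →
    (b : EReal) ≤ R ∧ Set.EqOn w u (Set.Ioo 0 b)) ∧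
  (R = ⊤ ∨ ∃ Rr : ℝ, R = (Rr : EReal) ∧
    Tendsto u (nhdsWithin Rr (Set.Iio Rr)) atTop)

/-- **Monotone bounded shooting solutions are global and converge to `1`.** -/
theorem monotone_bounded_is_global (n : ℝ) (hn : 0 < n)
    (v : ℝ → ℝ → ℝ) (R : ℝ → EReal)
    (hfam : ∀ α : ℝ, 0 ≤ α → IsMaximalVortexSol n α (v α) (R α))
    (α : ℝ) (hα : 0 < α)
    (hmono : ∀ r ∈ MaxDom (R α), 0 < deriv (v α) r)
    (hbd : ∀ r ∈ MaxDom (R α), v α r ≤ 1) :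
    R α = ⊤ ∧ Tendsto (v α) atTop (nhds 1) := by

  obtain ⟨hR0, hsol, h0, hmax, halt⟩ := hfam α hα.le
  set u := v α with hu
  -- Step 1: `R α = ⊤`
  have hRtop : R α = ⊤ := by
    rcases halt with h | ⟨Rr, hRr, hblow⟩
    · exact h
    · exfalso
      have hRrpos : 0 < Rr := by
        rw [hRr] at hR0; exact_mod_cast hR0
      have h1 : ∀ᶠ r in nhdsWithin Rr (Set.Iio Rr), 1 < u r :=
        hblow.eventually_gt_atTop 1
      have h2 : ∀ᶠ r in nhdsWithin Rr (Set.Iio Rr), Rr / 2 < r :=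
        eventually_nhdsWithin_of_eventually_nhds (eventually_gt_nhds (by linarith))
      obtain ⟨r, hr1, hr2, hr3⟩ :=
        (h1.and (h2.and self_mem_nhdsWithin)).exists
      have hrdom : r ∈ MaxDom (R α) := by
        refine ⟨by linarith, ?_⟩
        rw [hRr]; exact_mod_cast hr3
      exact absurd (hbd r hrdom) (by simpa using hr1)
  refine ⟨hRtop, ?_⟩
  -- restate on `Ioi 0`
  have hdomeq : MaxDom (R α) = Set.Ioi (0:ℝ) := by
    rw [hRtop]; ext r; simp [MaxDom]
  have hC2 : ContDiffOn ℝ 2 u (Set.Ioi 0) := hdomeq ▸ hsol.1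
  have heq : ∀ r ∈ Set.Ioi (0:ℝ), VortexEqAt n u r := by
    intro r hr; exact hsol.2 r (by rw [hdomeq]; exact hr)
  have hmono' : ∀ r ∈ Set.Ioi (0:ℝ), 0 < deriv u r := by
    intro r hr; exact hmono r (by rw [hdomeq]; exact hr)
  have hbd' : ∀ r ∈ Set.Ioi (0:ℝ), u r ≤ 1 := by
    intro r hr; exact hbd r (by rw [hdomeq]; exact hr)
  have hcont : ContinuousOn u (Set.Ioi 0) := hC2.continuousOn
  have hsm : StrictMonoOn u (Set.Ioi 0) :=
    strictMonoOn_of_deriv_pos (convex_Ioi 0) hcont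
      (by rw [interior_Ioi]; exact hmono')
  -- positivity
  have hpos : ∀ r ∈ Set.Ioi (0:ℝ), 0 < u r := by
    intro r hr
    have hev : ∀ᶠ x in nhdsWithin 0 (Set.Ioi 0), 0 < u x / x ^ n :=
      h0.eventually (eventually_gt_nhds hα)
    have hsmall : ∀ᶠ x in nhdsWithin 0 (Set.Ioi 0), x < r :=
      eventually_nhdsWithin_of_eventually_nhds (eventually_lt_nhds hr)
    obtain ⟨x, hx1, hx2, hx3⟩ := (hev.and (hsmall.and self_mem_nhdsWithin)).exists
    have hxpos : (0:ℝ) < x := hx3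
    have hux : 0 < u x := by
      have h := mul_pos hx1 (Real.rpow_pos_of_pos hxpos n)
      rwa [div_mul_cancel₀ _ (ne_of_gt (Real.rpow_pos_of_pos hxpos n))] at h
    exact hux.trans (hsm hx3 hr hx2)
  -- the limit
  have hne : (u '' Set.Ioi 0).Nonempty := ⟨u 1, Set.mem_image_of_mem _ (by norm_num)⟩
  have hbdd : BddAbove (u '' Set.Ioi 0) := by
    refine ⟨1, ?_⟩
    rintro _ ⟨r, hr, rfl⟩; exact hbd' r hr
  set L := sSup (u '' Set.Ioi 0) with hL
  have hle : ∀ r ∈ Set.Ioi (0:ℝ), u r ≤ L := fun r hr =>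
    le_csSup hbdd (Set.mem_image_of_mem _ hr)
  have hLle1 : L ≤ 1 := by
    apply csSup_le hne
    rintro _ ⟨r, hr, rfl⟩; exact hbd' r hr
  have hLpos : 0 < L := lt_of_lt_of_le (hpos 1 (by norm_num)) (hle 1 (by norm_num))
  have htend : Tendsto u atTop (nhds L) := by
    rw [tendsto_order]
    constructor
    · intro a ha
      obtain ⟨_, ⟨r0, hr0, rfl⟩, har0⟩ := exists_lt_of_lt_csSup hne ha
      filter_upwards [eventually_ge_atTop (r0 + 1)] with r hr
      exact har0.trans (hsm hr0 (by exact lt_trans (show (0:ℝ) < r0 from hr0) (by linarith)) (by linarith))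
    · intro b hb
      filter_upwards [eventually_ge_atTop 1] with r hr
      exact lt_of_le_of_lt (hle r (by simp; linarith)) hb
  -- derivative facts
  have hC1 : ContDiffOn ℝ 1 (deriv u) (Set.Ioi 0) :=
    hC2.deriv_of_isOpen isOpen_Ioi (by norm_num)
  have hdiff' : ∀ r ∈ Set.Ioi (0:ℝ), DifferentiableAt ℝ (deriv u) r := by
    intro r hr
    exact (hC1.differentiableOn (by norm_num)).differentiableAt (isOpen_Ioi.mem_nhds hr)
  set g : ℝ → ℝ := fun r => Real.sinh r * deriv u r with hg
  have hgdiff : ∀ r ∈ Set.Ioi (0:ℝ), DifferentiableAt ℝ g r := by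
    intro r hr
    exact (Real.differentiable_sinh r).mul (hdiff' r hr)
  have hgpos : ∀ r ∈ Set.Ioi (0:ℝ), 0 < g r := by
    intro r hr
    exact mul_pos (Real.sinh_pos_iff.2 hr) (hmono' r hr)
  have hgderiv : ∀ r ∈ Set.Ioi (0:ℝ),
      deriv g r = n ^ 2 * u r / Real.sinh r - 2 * Real.sinh r * (u r - u r ^ 3) := by
    intro r hr
    have hS : 0 < Real.sinh r := Real.sinh_pos_iff.2 hr
    have h1 : deriv g r
        = Real.cosh r * deriv u r + Real.sinh r * deriv (deriv u) r := by
      rw [hg]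
      rw [deriv_fun_mul (Real.differentiable_sinh r) (hdiff' r hr), Real.deriv_sinh]
    have heqr := heq r hr
    unfold VortexEqAt at heqr
    rw [h1]
    field_simp at heqr ⊢
    nlinarith [heqr, sq_nonneg (Real.sinh r)]
  -- L = 1
  have hL1 : L = 1 := by
    by_contra hneq
    have hLlt : L < 1 := lt_of_le_of_ne hLle1 hneq
    set c := L - L ^ 3 with hc
    have hcpos : 0 < c := by
      rw [hc]
      nlinarith [mul_pos hLpos (mul_pos (sub_pos.2 hLlt) (by linarith : (0:ℝ) < 1 + L))]
    have hub : ∀ᶠ r in atTop, deriv g r ≤ -(c / 2) := by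
      have h1 : ∀ᶠ r in atTop, c / 2 < u r - u r ^ 3 := by
        have ht : Tendsto (fun r => u r - u r ^ 3) atTop (nhds (L - L ^ 3)) :=
          htend.sub (htend.pow 3)
        exact ht.eventually (eventually_gt_nhds (by linarith))
      have h2 : ∀ᶠ r in atTop, 2 * n ^ 2 / c ≤ Real.sinh r := by
        filter_upwards [eventually_ge_atTop (max 1 (2 * n ^ 2 / c))] with r hr
        have hr1 : (1:ℝ) ≤ r := le_trans (le_max_left _ _) hr
        have := (Real.self_lt_sinh_iff.2 (by linarith : (0:ℝ) < r))
        exact le_trans (le_trans (le_max_right _ _) hr) this.le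
      have h3 : ∀ᶠ r in atTop, (1:ℝ) ≤ r := eventually_ge_atTop 1
      filter_upwards [h1, h2, h3] with r hr1 hr2 hr3
      have hr0 : (0:ℝ) < r := by linarith
      have hS : 0 < Real.sinh r := Real.sinh_pos_iff.2 hr0
      have hS1 : (1:ℝ) ≤ Real.sinh r :=
        le_trans hr3 (Real.self_lt_sinh_iff.2 hr0).le
      rw [hgderiv r hr0]
      have hu1 : u r ≤ 1 := hbd' r hr0
      have hup : 0 < u r := hpos r hr0
      have hA : n ^ 2 * u r / Real.sinh r ≤ c / 2 := by
        rw [div_le_iff₀ hS]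
        have h4 : c / 2 * (2 * n ^ 2 / c) = n ^ 2 := by field_simp
        nlinarith [mul_le_mul_of_nonneg_left hr2 (le_of_lt (by linarith : (0:ℝ) < c / 2))]
      nlinarith [mul_le_mul_of_nonneg_left hS1 hcpos.le, mul_lt_mul_of_pos_left hr1 hS]
    obtain ⟨r0', hr0'⟩ := eventually_atTop.1 hub
    set r1 := max r0' 1 with hr1def
    have hr1pos : (0:ℝ) < r1 := lt_of_lt_of_le one_pos (le_max_right _ _)
    -- antitone of g r + (c/2) r on Ici r1
    have hanti : AntitoneOn (fun r => g r + c / 2 * r) (Set.Ici r1) := by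
      apply antitoneOn_of_deriv_nonpos (convex_Ici r1)
      · intro x hx
        have hx0 : (0:ℝ) < x := lt_of_lt_of_le hr1pos hx
        exact ((hgdiff x hx0).add ((differentiableAt_id.const_mul (c/2)))).continuousAt.continuousWithinAt
      · intro x hx
        rw [interior_Ici] at hx
        have hx0 : (0:ℝ) < x := lt_trans hr1pos hx
        exact ((hgdiff x hx0).add (differentiableAt_id.const_mul (c/2))).differentiableWithinAt
      · intro x hx
        rw [interior_Ici] at hx
        have hx0 : (0:ℝ) < x := lt_trans hr1pos hx
        have hd : HasDerivAt (fun r => g r + c / 2 * r) (deriv g x + c / 2) x := by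
          exact ((hgdiff x hx0).hasDerivAt.add ((hasDerivAt_id' x).const_mul (c / 2))).congr_deriv (by ring)
        rw [hd.deriv]
        have hge : deriv g x ≤ -(c / 2) :=
          hr0' x (le_trans (le_max_left _ _) hx.le)
        linarith
    set r2 := r1 + 2 * g r1 / c + 1 with hr2def
    have hgr1pos : 0 < g r1 := hgpos r1 hr1pos
    have hr2ge : r1 ≤ r2 := by
      have h5 : 0 ≤ 2 * g r1 / c := by positivity
      rw [hr2def]; linarith
    have hkey : g r2 + c / 2 * r2 ≤ g r1 + c / 2 * r1 :=
      hanti (Set.self_mem_Ici) hr2ge hr2ge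
    have hgr2pos : 0 < g r2 := hgpos r2 (lt_of_lt_of_le hr1pos hr2ge)
    have hexp : c / 2 * r2 = c / 2 * r1 + g r1 + c / 2 := by
      rw [hr2def]; field_simp
    linarith [hkey, hgr2pos]
  rw [← hL1]; exact htend
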